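/- Ultrafilter lemma for sets with walls: if (S,P) is a set with walls and φ is a filter on P supported on a subset Q ⊆ P, then there exists an ultrafilter x on P with x(h) = φ(h) for every h ∈ Q. -/
import Mathlib


open Set

namespace WallDuality

variable {S : Type*}

/-- A wall on `S`, recorded as the unordered pair of its two complementary halfspaces. -/
def IsWall (h : Set (Set S)) : Prop := ∃ A : Set S, h = {A, Aᶜ}

/-- A set with walls: every element of `P` is a wall on `S`. -/
def IsWallSystem (P : Set (Set (Set S))) : Prop := ∀ h ∈ P, IsWall h

variable (P : Set (Set (Set S)))

/-- An ultrafilter on `P`: a consistent choice of a halfspace of each wall of `P`. -/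
def IsUltra (x : ↥P → Set S) : Prop :=
  (∀ w : ↥P, x w ∈ w.1) ∧
    ∀ (w₁ w₂ : ↥P) (A B : Set S), A ∈ w₁.1 → B ∈ w₂.1 → A ⊆ B → x w₁ = A → x w₂ = B

/-- The set `X̂` of all ultrafilters on `P`. -/
def hatX : Set (↥P → Set S) := {x | IsUltra P x}

/-- The principal ultrafilter of a point `s`: each wall is oriented towards `s`. -/
def principalUF (s : S) : ↥P → Set S := fun w => ⋃₀ {A | A ∈ w.1 ∧ s ∈ A}

/-- The pseudodistance associated with a collection `C` of subsets of `P`: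
the supremum of the cardinalities of members of `C` all of whose walls separate
the two orientations. -/
noncomputable def wallDist (C : Set (Set ↥P)) (x y : ↥P → Set S) : ℕ∞ :=
  ⨆ c ∈ {c | c ∈ C ∧ ∀ w ∈ c, x w ≠ y w}, c.encard

/-- A dualisable system on `(S, P)`. -/
structure IsDualisable (C : Set (Set ↥P)) : Prop where
  singleton_mem : ∀ w : ↥P, ({w} : Set ↥P) ∈ C
  subset_mem : ∀ c ∈ C, ∀ c' ⊆ c, c' ∈ C
  bounded : ∀ s t : S, ∃ M : ℕ, ∀ c ∈ C,
    (∀ w ∈ c, principalUF P s w ≠ principalUF P t w) → c.encard ≤ (M : ℕ∞)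

/-- The dual space `X_C`: ultrafilters at finite distance from all principal ones. -/
def dualSpace (C : Set (Set ↥P)) : Set (↥P → Set S) :=
  {x | IsUltra P x ∧ ∀ s : S, wallDist P C x (principalUF P s) ≠ ⊤}

/-- The majority-vote median of three orientations. -/
def medianUF (x y z : ↥P → Set S) : ↥P → Set S :=
  fun w => x w ∩ y w ∪ x w ∩ z w ∪ y w ∩ z w

/-- A `P`-convex subset of `X̂`: an intersection of halfspaces. -/
def IsPConvex (C' : Set (↥P → Set S)) : Prop :=
  ∃ (Q : Set ↥P) (σ : ↥P → Set S), (∀ w ∈ Q, σ w ∈ w.1) ∧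
    C' = {v | IsUltra P v ∧ ∀ w ∈ Q, v w = σ w}

open scoped Classical in
/-- The gate of `z` to a set `C'` of orientations: reverse the orientation of exactly
those walls that separate `z` from `C'`. -/
noncomputable def gateUF (C' : Set (↥P → Set S)) (z : ↥P → Set S) : ↥P → Set S :=
  fun w => if ∃ v ∈ C', v w = z w then z w else (z w)ᶜ

/-- `A` is gated in `Y` (with respect to the majority-vote median). -/
def IsGatedIn (Y A : Set (↥P → Set S)) : Prop :=
  ∀ x ∈ Y, ∃! g, g ∈ A ∧ ∀ a ∈ A, medianUF P a g x = g

/-- `σ` is a nested choice of halfspaces witnessing that `c` is a chain. -/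
def IsChainOrder (σ : ↥P → Set S) (c : Set ↥P) : Prop :=
  (∀ w ∈ c, σ w ∈ w.1) ∧ ∀ w₁ ∈ c, ∀ w₂ ∈ c, σ w₁ ⊆ σ w₂ ∨ σ w₂ ⊆ σ w₁

/-- A chain of walls. -/
def IsWallChain (c : Set ↥P) : Prop := ∃ σ, IsChainOrder P σ c

/-- A system of chains: a dualisable system all of whose members are chains. -/
def IsChainSystem (C : Set (Set ↥P)) : Prop :=
  IsDualisable P C ∧ ∀ c ∈ C, IsWallChain P c

/-- `C` is `m`-gluable: two members of `C`, one entirely preceding the other and with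
union a chain, can be glued after removing at most `m` consecutive walls taken from
the last `m` walls of the first and the first `m` walls of the second. -/
def IsGluable (C : Set (Set ↥P)) (m : ℕ) : Prop :=
  ∀ c₁ ∈ C, ∀ c₂ ∈ C, ∀ σ : ↥P → Set S,
    IsChainOrder P σ (c₁ ∪ c₂) → Disjoint c₁ c₂ →
    (∀ w₁ ∈ c₁, ∀ w₂ ∈ c₂, σ w₁ ⊆ σ w₂) →
    ∃ b ⊆ c₁ ∪ c₂,
      b.encard ≤ (m : ℕ∞) ∧
      (∀ w ∈ b ∩ c₁, {w' | w' ∈ c₁ ∧ σ w ⊂ σ w'}.encard < (m : ℕ∞)) ∧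
      (∀ w ∈ b ∩ c₂, {w' | w' ∈ c₂ ∧ σ w' ⊂ σ w}.encard < (m : ℕ∞)) ∧
      (∀ w₁ ∈ b, ∀ w₂ ∈ b, ∀ w ∈ c₁ ∪ c₂, σ w₁ ⊆ σ w → σ w ⊆ σ w₂ → w ∈ b) ∧
      (c₁ ∪ c₂) \ b ∈ C

/-- The ball of radius `r` about `x` in `X_C`. -/
def ballX (C : Set (Set ↥P)) (x : ↥P → Set S) (r : ℕ∞) : Set (↥P → Set S) :=
  {z | z ∈ dualSpace P C ∧ wallDist P C x z ≤ r}

/-- The normal wall path: the gate of `y` to the ball of radius `r` about `x`. -/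
noncomputable def nwp (C : Set (Set ↥P)) (x y : ↥P → Set S) (r : ℕ) : ↥P → Set S :=
  gateUF P (ballX P C x (r : ℕ∞)) y

/-- Two walls cross: all four quarterspaces are nonempty. -/
def Crosses (w₁ w₂ : ↥P) : Prop := ∀ A ∈ w₁.1, ∀ B ∈ w₂.1, (A ∩ B).Nonempty

/-- `C` is `L`-separated. -/
def IsSeparated (C : Set (Set ↥P)) (L : ℕ) : Prop :=
  ∀ w₁ w₂ : ↥P, w₁ ≠ w₂ → ({w₁, w₂} : Set ↥P) ∈ C →
    ∀ c ∈ C, (∀ w ∈ c, Crosses P w w₁ ∧ Crosses P w w₂) → c.encard ≤ (L : ℕ∞)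

end WallDuality

namespace WallDuality

section Aux

variable {S : Type*}

/-- A consistent partial orientation of walls, recorded as a set of pairs
(wall, chosen halfspace). -/
def Consistent (P : Set (Set (Set S))) (G : Set (↥P × Set S)) : Prop :=
  (∀ p ∈ G, p.2 ∈ p.1.1) ∧
    ∀ p ∈ G, ∀ q ∈ G, ∀ B ∈ q.1.1, p.2 ⊆ B → q.2 = B

lemma compl_mem_wall {P : Set (Set (Set S))} (hP : IsWallSystem P) (w : ↥P)
    {C : Set S} (hC : C ∈ w.1) : Cᶜ ∈ w.1 := by
  obtain ⟨A, h⟩ := hP w.1 w.2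
  rw [h] at hC ⊢
  simp only [Set.mem_insert_iff, Set.mem_singleton_iff] at hC ⊢
  rcases hC with h1 | h1 <;> rw [h1]
  · right; rfl
  · left; exact compl_compl A

lemma eq_compl_of_ne {P : Set (Set (Set S))} (hP : IsWallSystem P) (w : ↥P)
    {C B : Set S} (hC : C ∈ w.1) (hB : B ∈ w.1) (hne : B ≠ C) : B = Cᶜ := by
  obtain ⟨A, h⟩ := hP w.1 w.2
  rw [h] at hC hB
  simp only [Set.mem_insert_iff, Set.mem_singleton_iff] at hC hB
  rcases hC with h1 | h1 <;> rcases hB with h2 | h2 <;> rw [h1] at hne ⊢ <;>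
    rw [h2] at hne ⊢ <;>
    first
      | rfl
      | exact (compl_compl A).symm
      | exact absurd rfl hne

lemma no_sub_compl {P : Set (Set (Set S))} (hS : Nonempty S) (hP : IsWallSystem P)
    {G : Set (↥P × Set S)} (hG : Consistent P G)
    {p q : ↥P × Set S} (hp : p ∈ G) (hq : q ∈ G) (h : p.2 ⊆ q.2ᶜ) : False := by
  have h1 : q.2ᶜ ∈ q.1.1 := compl_mem_wall hP q.1 (hG.1 q hq)
  have h2 : q.2 = q.2ᶜ := hG.2 p hp q hq _ h1 h
  obtain ⟨s⟩ := hS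
  have h3 : s ∈ q.2 ∪ q.2ᶜ := by simp
  rcases h3 with hs | hs
  · have hs' := hs; rw [h2] at hs'; exact hs' hs
  · have hs' := hs; rw [← h2] at hs'; exact hs hs'

lemma exists_extend {P : Set (Set (Set S))} (hP : IsWallSystem P)
    {G : Set (↥P × Set S)} (hG : Consistent P G) (w : ↥P) :
    ∃ C ∈ w.1, Consistent P (insert (w, C) G) := by
  obtain ⟨A, hA⟩ := hP w.1 w.2
  have hAmem : A ∈ w.1 := by rw [hA]; exact Set.mem_insert _ _
  have hAcmem : Aᶜ ∈ w.1 := compl_mem_wall hP w hAmem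
  by_cases hS : Nonempty S
  · by_contra hcon
    push_neg at hcon
    have key : ∀ C ∈ w.1,
        (∃ q ∈ G, C ⊆ q.2ᶜ) ∨ (∃ p ∈ G, p.2 ⊆ Cᶜ) ∨ C ⊆ Cᶜ := by
      intro C hCmem
      have hfail := hcon C hCmem
      by_contra hk
      push_neg at hk
      obtain ⟨hk1, hk2, hk3⟩ := hk
      apply hfail
      constructor
      · rintro p (rfl | hp)
        · exact hCmem
        · exact hG.1 p hp
      · rintro p (rfl | hp) q (rfl | hq) B hB hsub
        · by_contra hne
          have hBC : B = Cᶜ := eq_compl_of_ne hP w hCmem hB (fun h => hne h.symm)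
          exact hk3 (hBC ▸ hsub)
        · by_contra hne
          have hBC : B = q.2ᶜ :=
            eq_compl_of_ne hP q.1 (hG.1 q hq) hB (fun h => hne h.symm)
          exact hk1 q hq (hBC ▸ hsub)
        · by_contra hne
          have hBC : B = Cᶜ := eq_compl_of_ne hP w hCmem hB (fun h => hne h.symm)
          exact hk2 p hp (hBC ▸ hsub)
        · exact hG.2 p hp q hq B hB hsub
    have keyA := key A hAmem
    have keyAc := key Aᶜ hAcmem
    simp only [compl_compl] at keyAc
    rcases keyA with ⟨q, hq, hqa⟩ | ⟨p, hp, hpa⟩ | hsa <;>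
      rcases keyAc with ⟨r, hr, hrb⟩ | ⟨p', hp', hpb⟩ | hsb
    · -- A ⊆ q.2ᶜ, Aᶜ ⊆ r.2ᶜ
      have hr2 : r.2 ⊆ A := fun s hs => by
        by_contra h; exact hrb h hs
      exact no_sub_compl hS hP hG hr hq (hr2.trans hqa)
    · -- A ⊆ q.2ᶜ, p'.2 ⊆ A
      exact no_sub_compl hS hP hG hp' hq (hpb.trans hqa)
    · -- A ⊆ q.2ᶜ, Aᶜ ⊆ A
      have : q.2 ⊆ q.2ᶜ := fun s hs => by
        rcases em (s ∈ A) with h | h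
        · exact hqa h
        · exact hqa (hsb h)
      exact no_sub_compl hS hP hG hq hq this
    · -- p.2 ⊆ Aᶜ, Aᶜ ⊆ r.2ᶜ
      exact no_sub_compl hS hP hG hp hr (hpa.trans hrb)
    · -- p.2 ⊆ Aᶜ, p'.2 ⊆ A
      have hA2 : A ⊆ p.2ᶜ := fun s hs hs2 => hpa hs2 hs
      exact no_sub_compl hS hP hG hp' hp (hpb.trans hA2)
    · -- p.2 ⊆ Aᶜ, Aᶜ ⊆ A
      have : p.2 ⊆ p.2ᶜ := fun s hs => absurd (hsb (hpa hs)) (hpa hs)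
      exact no_sub_compl hS hP hG hp hp this
    · -- A ⊆ Aᶜ, Aᶜ ⊆ r.2ᶜ
      have hr2 : r.2 ⊆ A := fun s hs => by
        by_contra h; exact hrb h hs
      exact no_sub_compl hS hP hG hr hr ((hr2.trans hsa).trans hrb)
    · -- A ⊆ Aᶜ, p'.2 ⊆ A
      have : p'.2 ⊆ p'.2ᶜ := fun s hs => absurd (hpb hs) (hsa (hpb hs))
      exact no_sub_compl hS hP hG hp' hp' this
    · -- A ⊆ Aᶜ, Aᶜ ⊆ A
      obtain ⟨s⟩ := hS
      rcases em (s ∈ A) with h | h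
      · exact hsa h h
      · exact h (hsb h)
  · haveI : IsEmpty S := not_nonempty_iff.mp hS
    have heq : ∀ X Y : Set S, X = Y := fun X Y => by
      ext s; exact isEmptyElim s
    refine ⟨A, hAmem, ?_, ?_⟩
    · rintro p (rfl | hp)
      · exact hAmem
      · exact hG.1 p hp
    · intro p _ q _ B _ _
      exact heq q.2 B

end Aux

/-- **Ultrafilter lemma** (Lemma 3.2): every filter on a set with walls extends
to an ultrafilter. -/
theorem filter_extends_to_ultrafilter
    {S : Type*} (P Q : Set (Set (Set S))) (hP : IsWallSystem P) (hQP : Q ⊆ P)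
    (φ : ↥P → Set S)
    (hφ_half : ∀ w : ↥P, w.1 ∈ Q → φ w ∈ w.1)
    (hφ_filter : ∀ w₁ w₂ : ↥P, w₁.1 ∈ Q → w₂.1 ∈ Q → ∀ A B : Set S,
      A ∈ w₁.1 → B ∈ w₂.1 → A ⊆ B → φ w₁ = A → φ w₂ = B) :
    ∃ x : ↥P → Set S, IsUltra P x ∧ ∀ w : ↥P, w.1 ∈ Q → x w = φ w := by
  set G₀ : Set (↥P × Set S) := {p | p.1.1 ∈ Q ∧ p.2 = φ p.1} with hG₀def
  have hG0c : Consistent P G₀ := by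
    constructor
    · intro p hp
      rw [hp.2]
      exact hφ_half p.1 hp.1
    · intro p hp q hq B hB hsub
      rw [hq.2]
      refine hφ_filter p.1 q.1 hp.1 hq.1 p.2 B ?_ hB hsub hp.2.symm
      rw [hp.2]
      exact hφ_half p.1 hp.1
  have hchainub : ∀ c ⊆ {G | Consistent P G}, IsChain (· ⊆ ·) c → c.Nonempty →
      ∃ ub ∈ {G | Consistent P G}, ∀ s ∈ c, s ⊆ ub := by
    intro c hc hchain hne
    refine ⟨⋃₀ c, ⟨?_, ?_⟩, fun s hs => Set.subset_sUnion_of_mem hs⟩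
    · rintro p ⟨g, hg, hp⟩
      exact (hc hg).1 p hp
    · rintro p ⟨g1, hg1, hp⟩ q ⟨g2, hg2, hq⟩ B hB hsub
      rcases hchain.total hg1 hg2 with h | h
      · exact (hc hg2).2 p (h hp) q hq B hB hsub
      · exact (hc hg1).2 p hp q (h hq) B hB hsub
  obtain ⟨M, hG0M, hMmax⟩ := zorn_subset_nonempty {G | Consistent P G} hchainub G₀ hG0c
  have hMc : Consistent P M := hMmax.prop
  have htot : ∀ w : ↥P, ∃ C, (w, C) ∈ M := by
    intro w
    obtain ⟨C, _, hCons⟩ := exists_extend hP hMc w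
    refine ⟨C, ?_⟩
    have hsub : M ⊆ insert (w, C) M := Set.subset_insert _ _
    have := hMmax.2 hCons hsub
    exact this (Set.mem_insert _ _)
  choose x hx using htot
  refine ⟨x, ⟨fun w => hMc.1 (w, x w) (hx w), ?_⟩, ?_⟩
  · intro w₁ w₂ A B hA hB hAB hxA
    have h1 : (w₁, A) ∈ M := by rw [← hxA]; exact hx w₁
    exact hMc.2 (w₁, A) h1 (w₂, x w₂) (hx w₂) B hB hAB
  · intro w hwQ
    have h0 : (w, φ w) ∈ M := hG0M ⟨hwQ, rfl⟩
    exact hMc.2 (w, φ w) h0 (w, x w) (hx w) (φ w) (hφ_half w hwQ) (subset_refl _)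

end WallDuality
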